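/- Let Ω ⊂ ℝⁿ be a bounded measurable set of finite positive Lebesgue measure, J continuous, bounded, nonnegative and symmetric, α, β, γ, M, N, δ, ρ > 0, f : ℝ² → ℝ continuously differentiable with ∂f/∂x ≤ −α and 0 ≤ ∂f/∂y ≤ βN everywhere, and m : ℝ → ℝ continuously differentiable with 0 ≤ m′ ≤ γM/δ. Let T > 0 and let x, X, η : [0,T] × Ω → ℝ be continuous, bounded, continuously differentiable in t with bounded time-derivative, satisfying pointwise on [0,T] × Ω the equations ∂x/∂t = f(x, m(x)+η) + K_J x and ∂X/∂t = f(X, m(X)) + K_J X. Then for every t ∈ [0,T], d/dt ∫_Ω (x(t,u)−X(t,u))² du ≤ 2C₁ ∫_Ω (x(t,u)−X(t,u))² du + 2C₂ ∫_Ω η(t,u)² du, where C₁ = βN(γM/δ + ρ²) − α and C₂ = βN/ρ². -/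

import Mathlib

open MeasureTheory Real

private lemma aux_integrable {E : Type*} [MeasurableSpace E] {μ : Measure E} [IsFiniteMeasure μ]
    {g : E → ℝ} (hg : AEStronglyMeasurable g μ) {C : ℝ} (hC : ∀ u, |g u| ≤ C) :
    Integrable g μ :=
  (integrable_const C).mono' hg (Filter.Eventually.of_forall fun u => by simpa using hC u)

private lemma aux_mvt_le {g : ℝ → ℝ} (hg : Differentiable ℝ g) {c : ℝ}
    (h : ∀ s, deriv g s ≤ c) (a b : ℝ) : (a - b) * (g a - g b) ≤ c * (a - b) ^ 2 := by
  have key : ∀ p q : ℝ, p < q → (q - p) * (g q - g p) ≤ c * (q - p) ^ 2 := by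
    intro p q hpq
    obtain ⟨ξ, -, hξ⟩ := exists_hasDerivAt_eq_slope g (deriv g) hpq hg.continuous.continuousOn
      (fun y _ => (hg y).hasDerivAt)
    have hne : q - p ≠ 0 := by linarith
    have h2 : g q - g p = deriv g ξ * (q - p) := by
      field_simp at hξ; linarith [hξ]
    rw [h2]
    nlinarith [h ξ, sq_nonneg (q - p)]
  rcases lt_trichotomy a b with hab | hab | hab
  · have := key a b hab; nlinarith [this]
  · subst hab; simp
  · have := key b a hab; nlinarith [this]

private lemma aux_lip {g : ℝ → ℝ} (hg : Differentiable ℝ g) {c : ℝ}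
    (h : ∀ s, |deriv g s| ≤ c) (a b : ℝ) : |g a - g b| ≤ c * |a - b| := by
  have := Convex.norm_image_sub_le_of_norm_hasDerivWithin_le
    (f := g) (f' := deriv g) (s := Set.univ)
    (fun y _ => (hg y).hasDerivAt.hasDerivWithinAt)
    (fun y _ => by simpa using h y) convex_univ (Set.mem_univ b) (Set.mem_univ a)
  simpa [Real.norm_eq_abs] using this

set_option maxHeartbeats 2000000 in
/-- Differential inequality for the L² distance. With Ω, J as in (H_J),
α, β, γ, M, N, δ, ρ > 0, f C¹ with ∂f/∂x ≤ -α and 0 ≤ ∂f/∂y ≤ βN, m C¹ with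
0 ≤ m' ≤ γM/δ, T > 0, and x, X, η continuous, bounded, continuously differentiable in
time with bounded time-derivative satisfying ∂x/∂t = f(x, m(x)+η) + K_J x and
∂X/∂t = f(X, m(X)) + K_J X on [0,T] × Ω, one has for every t ∈ [0,T]
d/dt ∫_Ω (x-X)² ≤ 2C₁ ∫_Ω (x-X)² + 2C₂ ∫_Ω η², with C₁ = βN(γM/δ + ρ²) - α, C₂ = βN/ρ². -/
theorem stmt5 (n : ℕ) (Ω : Set (Fin n → ℝ)) (hΩm : MeasurableSet Ω)
    (hΩb : Bornology.IsBounded Ω) (hΩpos : 0 < volume Ω) (hΩfin : volume Ω < ⊤)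
    (J : (Fin n → ℝ) → ℝ) (hJc : Continuous J) (CJ : ℝ) (hJbd : ∀ z, |J z| ≤ CJ)
    (hJnn : ∀ z, 0 ≤ J z) (hJsym : ∀ z, J (-z) = J z)
    (hJint : Integrable J) (hJ1 : ∫ z, J z = 1)
    (α β γ M N δ ρ T : ℝ) (hα : 0 < α) (hβ : 0 < β) (hγ : 0 < γ)
    (hM : 0 < M) (hN : 0 < N) (hδ : 0 < δ) (hρ : 0 < ρ) (hT : 0 < T)
    (f : ℝ → ℝ → ℝ) (hf : ContDiff ℝ 1 (fun p : ℝ × ℝ => f p.1 p.2))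
    (hfx : ∀ a b : ℝ, deriv (fun s => f s b) a ≤ -α)
    (hfy : ∀ a b : ℝ, 0 ≤ deriv (fun s => f a s) b ∧ deriv (fun s => f a s) b ≤ β * N)
    (m : ℝ → ℝ) (hmC : ContDiff ℝ 1 m)
    (hm' : ∀ a : ℝ, 0 ≤ deriv m a ∧ deriv m a ≤ γ * M / δ)
    (x X η : ℝ → (Fin n → ℝ) → ℝ)
    (hxc : Continuous (fun p : ℝ × (Fin n → ℝ) => x p.1 p.2))
    (hXc : Continuous (fun p : ℝ × (Fin n → ℝ) => X p.1 p.2))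
    (hηc : Continuous (fun p : ℝ × (Fin n → ℝ) => η p.1 p.2))
    (Cb : ℝ) (hb : ∀ t u, |x t u| ≤ Cb ∧ |X t u| ≤ Cb ∧ |η t u| ≤ Cb)
    -- the equations: x and X are continuously differentiable in t on [0,T], with
    -- time-derivatives given by the right-hand sides of the system
    (hxeq : ∀ t ∈ Set.Icc (0 : ℝ) T, ∀ u ∈ Ω,
      HasDerivWithinAt (fun s => x s u)
        (f (x t u) (m (x t u) + η t u) + ∫ v in Ω, J (u - v) * (x t v - x t u))
        (Set.Icc 0 T) t)
    (hXeq : ∀ t ∈ Set.Icc (0 : ℝ) T, ∀ u ∈ Ω,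
      HasDerivWithinAt (fun s => X s u)
        (f (X t u) (m (X t u)) + ∫ v in Ω, J (u - v) * (X t v - X t u))
        (Set.Icc 0 T) t)
    -- bounded time-derivatives
    (Cd : ℝ)
    (hder : ∀ t ∈ Set.Icc (0 : ℝ) T, ∀ u ∈ Ω,
      |f (x t u) (m (x t u) + η t u) + ∫ v in Ω, J (u - v) * (x t v - x t u)| ≤ Cd ∧
      |f (X t u) (m (X t u)) + ∫ v in Ω, J (u - v) * (X t v - X t u)| ≤ Cd) :
    ∀ t ∈ Set.Icc (0 : ℝ) T, ∃ D : ℝ,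
      HasDerivWithinAt (fun s => ∫ u in Ω, (x s u - X s u) ^ 2) D (Set.Icc 0 T) t ∧
      D ≤ 2 * (β * N * (γ * M / δ + ρ ^ 2) - α) * (∫ u in Ω, (x t u - X t u) ^ 2) +
            2 * (β * N / ρ ^ 2) * ∫ u in Ω, (η t u) ^ 2 := by
  classical
  intro t₀ ht₀
  haveI : IsFiniteMeasure (volume.restrict Ω) :=
    ⟨by simpa [Measure.restrict_apply_univ] using hΩfin⟩
  -- basic positivity
  have hCb0 : 0 ≤ Cb := le_trans (abs_nonneg _) (hb 0 0).1
  obtain ⟨u₀, hu₀⟩ : Ω.Nonempty := MeasureTheory.nonempty_of_measure_ne_zero hΩpos.ne'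
  have hCd0 : 0 ≤ Cd :=
    le_trans (abs_nonneg _) (hder 0 ⟨le_refl 0, hT.le⟩ u₀ hu₀).1
  have hCJ0 : 0 ≤ CJ := le_trans (abs_nonneg _) (hJbd 0)
  have hβN0 : (0:ℝ) ≤ β * N := by positivity
  -- continuity in u
  have hxu : ∀ s, Continuous (fun u => x s u) :=
    fun s => hxc.comp (continuous_const.prodMk continuous_id)
  have hXu : ∀ s, Continuous (fun u => X s u) :=
    fun s => hXc.comp (continuous_const.prodMk continuous_id)
  have hηu : ∀ s, Continuous (fun u => η s u) :=
    fun s => hηc.comp (continuous_const.prodMk continuous_id)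
  -- differentiability of partial maps
  have hfdx : ∀ c : ℝ, Differentiable ℝ (fun s => f s c) :=
    fun c => (hf.comp (contDiff_id.prodMk contDiff_const)).differentiable one_ne_zero
  have hfdy : ∀ c : ℝ, Differentiable ℝ (fun s => f c s) :=
    fun c => (hf.comp (contDiff_const.prodMk contDiff_id)).differentiable one_ne_zero
  have hmd : Differentiable ℝ m := hmC.differentiable one_ne_zero
  -- abbreviations
  set P : ℝ → (Fin n → ℝ) → ℝ := fun t u =>
    f (x t u) (m (x t u) + η t u) + ∫ v in Ω, J (u - v) * (x t v - x t u) with hP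
  set Q : ℝ → (Fin n → ℝ) → ℝ := fun t u =>
    f (X t u) (m (X t u)) + ∫ v in Ω, J (u - v) * (X t v - X t u) with hQ
  set G : ℝ → (Fin n → ℝ) → ℝ := fun t u => 2 * (x t u - X t u) * (P t u - Q t u) with hG
  -- derivative of the square
  have hsqD : ∀ r ∈ Set.Icc (0:ℝ) T, ∀ u ∈ Ω,
      HasDerivWithinAt (fun s => (x s u - X s u) ^ 2) (G r u) (Set.Icc 0 T) r := by
    intro r hr u hu
    have h1 := (hxeq r hr u hu).sub (hXeq r hr u hu)
    have h2 := h1.pow 2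
    exact h2.congr_deriv (by simp [hG, hP, hQ])
  -- bound on the difference x - X
  have hwbd : ∀ s u, |x s u - X s u| ≤ 2 * Cb := by
    intro s u
    have a1 := abs_le.mp (hb s u).1
    have a2 := abs_le.mp (hb s u).2.1
    exact abs_le.mpr ⟨by linarith [a1.1, a2.2], by linarith [a1.2, a2.1]⟩
  -- bound on G on [0,T] × Ω
  have hGbd : ∀ r ∈ Set.Icc (0:ℝ) T, ∀ u ∈ Ω, |G r u| ≤ 8 * Cb * Cd := by
    intro r hr u hu
    have h1 : |x r u - X r u| ≤ 2 * Cb := hwbd r u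
    have h2 : |P r u - Q r u| ≤ 2 * Cd := by
      have a1 := abs_le.mp (hder r hr u hu).1
      have a2 := abs_le.mp (hder r hr u hu).2
      simp only [hP, hQ]
      exact abs_le.mpr ⟨by linarith [a1.1, a2.2], by linarith [a1.2, a2.1]⟩
    have h3 : |G r u| = 2 * |x r u - X r u| * |P r u - Q r u| := by
      rw [hG]
      rw [abs_mul, abs_mul, abs_two]
    rw [h3]
    nlinarith [abs_nonneg (x r u - X r u), abs_nonneg (P r u - Q r u),
      mul_le_mul h1 h2 (abs_nonneg _) (by linarith : (0:ℝ) ≤ 2 * Cb)]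
  -- integrability of squares
  have hsqInt : ∀ s : ℝ, IntegrableOn (fun u => (x s u - X s u) ^ 2) Ω := by
    intro s
    apply aux_integrable (((hxu s).sub (hXu s)).pow 2).aestronglyMeasurable.restrict
      (C := (2*Cb)^2)
    intro u
    show |(x s u - X s u) ^ 2| ≤ _
    rw [abs_pow]
    exact pow_le_pow_left₀ (abs_nonneg _) (hwbd s u) 2
  -- continuity of the nonlocal term
  have hKcont : ∀ (g : (Fin n → ℝ) → ℝ), Continuous g → ∀ (C : ℝ), (∀ u, |g u| ≤ C) →
      Continuous (fun u => ∫ v in Ω, J (u - v) * (g v - g u)) := by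
    intro g hg C hgb
    apply continuous_of_dominated (bound := fun _ => CJ * (2 * C))
    · intro u
      exact ((hJc.comp (continuous_const.sub continuous_id)).mul
        (hg.sub continuous_const)).aestronglyMeasurable.restrict
    · intro u
      refine Filter.Eventually.of_forall fun v => ?_
      have h1 : |g v - g u| ≤ 2 * C := by
        have a1 := abs_le.mp (hgb v); have a2 := abs_le.mp (hgb u)
        exact abs_le.mpr ⟨by linarith [a1.1, a2.2], by linarith [a1.2, a2.1]⟩
      calc ‖J (u - v) * (g v - g u)‖ = |J (u - v)| * |g v - g u| := by
            rw [Real.norm_eq_abs, abs_mul]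
        _ ≤ CJ * (2 * C) := mul_le_mul (hJbd _) h1 (abs_nonneg _) hCJ0
    · exact integrable_const _
    · refine Filter.Eventually.of_forall fun v => ?_
      exact (hJc.comp (continuous_id.sub continuous_const)).mul
        (continuous_const.sub hg)
  -- continuity of G t₀ in u
  have hfc : Continuous (fun p : ℝ × ℝ => f p.1 p.2) := hf.continuous
  have hmc : Continuous m := hmC.continuous
  have hGcont : Continuous (fun u => G t₀ u) := by
    have hPc : Continuous (fun u => P t₀ u) := by
      apply Continuous.add
      · exact hfc.comp (((hxu t₀)).prodMk ((hmc.comp (hxu t₀)).add (hηu t₀)))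
      · exact hKcont (fun u => x t₀ u) (hxu t₀) Cb (fun u => (hb t₀ u).1)
    have hQc : Continuous (fun u => Q t₀ u) := by
      apply Continuous.add
      · exact hfc.comp (((hXu t₀)).prodMk (hmc.comp (hXu t₀)))
      · exact hKcont (fun u => X t₀ u) (hXu t₀) Cb (fun u => (hb t₀ u).2.1)
    exact (continuous_const.mul ((hxu t₀).sub (hXu t₀))).mul (hPc.sub hQc)
  refine ⟨∫ u in Ω, G t₀ u, ?_, ?_⟩
  · -- Part 1: the derivative
    rw [hasDerivWithinAt_iff_tendsto_slope]
    have hmem : ∀ᶠ s in nhdsWithin t₀ (Set.Icc 0 T \ {t₀}), s ∈ Set.Icc (0:ℝ) T \ {t₀} :=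
      eventually_mem_nhdsWithin
    have key : Filter.Tendsto
        (fun s => ∫ u in Ω, ((x s u - X s u) ^ 2 - (x t₀ u - X t₀ u) ^ 2) / (s - t₀))
        (nhdsWithin t₀ (Set.Icc 0 T \ {t₀})) (nhds (∫ u in Ω, G t₀ u)) := by
      apply MeasureTheory.tendsto_integral_filter_of_dominated_convergence
        (bound := fun _ => 8 * Cb * Cd)
      · refine Filter.Eventually.of_forall fun s => ?_
        exact (((((hxu s).sub (hXu s)).pow 2).sub (((hxu t₀).sub (hXu t₀)).pow 2)).div_const
          _).aestronglyMeasurable.restrict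
      · refine hmem.mono fun s hs => ?_
        refine (ae_restrict_iff' hΩm).mpr (Filter.Eventually.of_forall fun u hu => ?_)
        have hmvt := Convex.norm_image_sub_le_of_norm_hasDerivWithin_le
          (f := fun r => (x r u - X r u) ^ 2) (f' := fun r => G r u) (s := Set.Icc 0 T)
          (fun r hr => hsqD r hr u hu)
          (fun r hr => by simpa [Real.norm_eq_abs] using hGbd r hr u hu)
          (convex_Icc 0 T) ht₀ hs.1
        have hne : s - t₀ ≠ 0 := sub_ne_zero.mpr (fun h => hs.2 (by simp [h]))
        rw [Real.norm_eq_abs, abs_div, div_le_iff₀ (abs_pos.mpr hne)]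
        simpa [Real.norm_eq_abs] using hmvt
      · exact integrable_const _
      · refine (ae_restrict_iff' hΩm).mpr (Filter.Eventually.of_forall fun u hu => ?_)
        have h1 := hsqD t₀ ht₀ u hu
        rw [hasDerivWithinAt_iff_tendsto_slope] at h1
        refine h1.congr fun s => ?_
        rw [slope_def_field]
    refine Filter.Tendsto.congr' ?_ key
    refine hmem.mono fun s hs => ?_
    show (∫ u in Ω, ((x s u - X s u) ^ 2 - (x t₀ u - X t₀ u) ^ 2) / (s - t₀)) = _
    rw [slope_def_field, ← integral_sub (hsqInt s) (hsqInt t₀), integral_div]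
  · -- Part 2: the bound
    -- the nonlocal difference kernel
    set K : (Fin n → ℝ) → ℝ := fun u =>
      ∫ v in Ω, J (u - v) * ((x t₀ v - X t₀ v) - (x t₀ u - X t₀ u)) with hK
    have hwc : Continuous (fun u => x t₀ u - X t₀ u) := (hxu t₀).sub (hXu t₀)
    have hKc : Continuous K := hKcont _ hwc (2*Cb) (fun u => hwbd t₀ u)
    have hKb : ∀ u, |K u| ≤ CJ * (4*Cb) * (volume Ω).toReal := by
      intro u
      rw [hK, ← Real.norm_eq_abs]
      refine norm_setIntegral_le_of_norm_le_const hΩfin (fun v _ => ?_)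
      · rw [Real.norm_eq_abs, abs_mul]
        have h1 : |(x t₀ v - X t₀ v) - (x t₀ u - X t₀ u)| ≤ 4 * Cb := by
          have a1 := abs_le.mp (hwbd t₀ v); have a2 := abs_le.mp (hwbd t₀ u)
          exact abs_le.mpr ⟨by linarith [a1.1, a2.2], by linarith [a1.2, a2.1]⟩
        exact mul_le_mul (hJbd _) h1 (abs_nonneg _) hCJ0
    -- integrability of v ↦ J(u-v)*(x t₀ v - x t₀ u) etc.
    have hIx : ∀ u, IntegrableOn (fun v => J (u - v) * (x t₀ v - x t₀ u)) Ω := by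
      intro u
      apply aux_integrable ((hJc.comp (continuous_const.sub continuous_id)).mul
        ((hxu t₀).sub continuous_const)).aestronglyMeasurable.restrict (C := CJ * (2*Cb))
      intro v
      show |J (u - v) * (x t₀ v - x t₀ u)| ≤ _
      rw [abs_mul]
      have a1 := abs_le.mp (hb t₀ v).1; have a2 := abs_le.mp (hb t₀ u).1
      exact mul_le_mul (hJbd _) (abs_le.mpr ⟨by linarith [a1.1, a2.2], by linarith [a1.2, a2.1]⟩)
        (abs_nonneg _) hCJ0
    have hIX : ∀ u, IntegrableOn (fun v => J (u - v) * (X t₀ v - X t₀ u)) Ω := by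
      intro u
      apply aux_integrable ((hJc.comp (continuous_const.sub continuous_id)).mul
        ((hXu t₀).sub continuous_const)).aestronglyMeasurable.restrict (C := CJ * (2*Cb))
      intro v
      show |J (u - v) * (X t₀ v - X t₀ u)| ≤ _
      rw [abs_mul]
      have a1 := abs_le.mp (hb t₀ v).2.1; have a2 := abs_le.mp (hb t₀ u).2.1
      exact mul_le_mul (hJbd _) (abs_le.mpr ⟨by linarith [a1.1, a2.2], by linarith [a1.2, a2.1]⟩)
        (abs_nonneg _) hCJ0
    have hKsplit : ∀ u, (∫ v in Ω, J (u - v) * (x t₀ v - x t₀ u)) -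
        (∫ v in Ω, J (u - v) * (X t₀ v - X t₀ u)) = K u := by
      intro u
      rw [hK, ← integral_sub (hIx u) (hIX u)]
      congr 1; funext v; ring
    -- pointwise estimate
    have hpt : ∀ u ∈ Ω, G t₀ u ≤
        (2*(β*N*(γ*M/δ)) - 2*α + β*N*ρ^2) * (x t₀ u - X t₀ u)^2
          + (β*N/ρ^2) * (η t₀ u)^2 + 2*(x t₀ u - X t₀ u) * K u := by
      intro u hu
      have hsplit : G t₀ u = 2*(x t₀ u - X t₀ u) *
          (f (x t₀ u) (m (x t₀ u) + η t₀ u) - f (X t₀ u) (m (X t₀ u)))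
          + 2*(x t₀ u - X t₀ u) * K u := by
        rw [← hKsplit u]
        simp only [hG, hP, hQ]
        ring
      set a := x t₀ u with ha
      set b := X t₀ u with hb'
      set ee := η t₀ u with hee
      have h1 : (a - b) * (f a (m a + ee) - f b (m a + ee)) ≤ -α * (a-b)^2 :=
        aux_mvt_le (hfdx (m a + ee)) (fun s => hfx s _) a b
      have h2 : |f b (m a + ee) - f b (m b)| ≤ β*N * |m a + ee - m b| :=
        aux_lip (hfdy b) (fun s => abs_le.mpr ⟨by linarith [(hfy b s).1], (hfy b s).2⟩) _ _
      have hγMδ0 : (0:ℝ) ≤ γ*M/δ := by positivity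
      have h3 : |m a - m b| ≤ (γ*M/δ) * |a - b| :=
        aux_lip hmd (fun s => abs_le.mpr ⟨by linarith [(hm' s).1], (hm' s).2⟩) a b
      have h4 : |m a + ee - m b| ≤ (γ*M/δ) * |a-b| + |ee| := by
        calc |m a + ee - m b| = |(m a - m b) + ee| := by ring_nf
          _ ≤ |m a - m b| + |ee| := abs_add_le _ _
          _ ≤ (γ*M/δ) * |a-b| + |ee| := by linarith [h3]
      have h5 : (a-b) * (f b (m a + ee) - f b (m b)) ≤
          β*N*((γ*M/δ)*(a-b)^2 + |a-b| * |ee|) := by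
        calc (a-b) * (f b (m a + ee) - f b (m b))
            ≤ |(a-b) * (f b (m a + ee) - f b (m b))| := le_abs_self _
          _ = |a-b| * |f b (m a + ee) - f b (m b)| := abs_mul _ _
          _ ≤ |a-b| * (β*N * ((γ*M/δ) * |a-b| + |ee|)) := by
              refine mul_le_mul_of_nonneg_left (h2.trans ?_) (abs_nonneg _)
              exact mul_le_mul_of_nonneg_left h4 hβN0
          _ = β*N*((γ*M/δ)*(|a-b| * |a-b|) + |a-b| * |ee|) := by ring
          _ = β*N*((γ*M/δ)*(a-b)^2 + |a-b| * |ee|) := by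
              rw [← abs_mul, abs_mul_self]; ring_nf
      have hyoung : |a-b| * |ee| ≤ (ρ^2*(a-b)^2 + ee^2/ρ^2)/2 := by
        have h2' : ee^2/ρ^2 = (ee/ρ)^2 := (div_pow ee ρ 2).symm
        have h1' : |ee| = |ee/ρ| * ρ := by
          rw [abs_div, abs_of_pos hρ]
          field_simp
        rw [h2', h1']
        nlinarith [sq_nonneg (ρ*|a-b| - |ee/ρ|), sq_abs (a-b), sq_abs (ee/ρ),
          abs_nonneg (a-b), abs_nonneg (ee/ρ), hρ]
      have hyoungβ : β*N*(|a-b| * |ee|) ≤ β*N*((ρ^2*(a-b)^2 + ee^2/ρ^2)/2) :=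
        mul_le_mul_of_nonneg_left hyoung hβN0
      rw [hsplit]
      have hfin : 2*(a-b) * (f a (m a + ee) - f b (m b)) ≤
          (2*(β*N*(γ*M/δ)) - 2*α + β*N*ρ^2) * (a-b)^2 + (β*N/ρ^2) * ee^2 := by
        have hsum : (a-b) * (f a (m a + ee) - f b (m b)) =
            (a-b) * (f a (m a + ee) - f b (m a + ee)) +
            (a-b) * (f b (m a + ee) - f b (m b)) := by ring
        have hdiv : β*N*(ee^2/ρ^2) = (β*N/ρ^2) * ee^2 := by ring
        linarith [h1, h5, hyoungβ]
      linarith [hfin]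
    -- integrability of all pieces
    have hηsqInt : IntegrableOn (fun u => (η t₀ u) ^ 2) Ω := by
      apply aux_integrable ((hηu t₀).pow 2).aestronglyMeasurable.restrict (C := Cb^2)
      intro u
      show |(η t₀ u) ^ 2| ≤ _
      rw [abs_pow]
      exact pow_le_pow_left₀ (abs_nonneg _) (hb t₀ u).2.2 2
    have hwKInt : IntegrableOn (fun u => 2*(x t₀ u - X t₀ u) * K u) Ω := by
      apply aux_integrable ((continuous_const.mul hwc).mul hKc).aestronglyMeasurable.restrict
        (C := 2*(2*Cb)*(CJ * (4*Cb) * (volume Ω).toReal))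
      intro u
      show |2 * (x t₀ u - X t₀ u) * K u| ≤ _
      rw [abs_mul, abs_mul, abs_two]
      have hvol : (0:ℝ) ≤ (volume Ω).toReal := ENNReal.toReal_nonneg
      have := mul_le_mul (hwbd t₀ u) (hKb u) (abs_nonneg _) (by linarith [hCb0] : (0:ℝ) ≤ 2*Cb)
      nlinarith [abs_nonneg (x t₀ u - X t₀ u), abs_nonneg (K u)]
    have hGInt : IntegrableOn (G t₀) Ω := by
      refine (integrable_const (8*Cb*Cd)).mono' hGcont.aestronglyMeasurable.restrict ?_
      refine (ae_restrict_iff' hΩm).mpr (Filter.Eventually.of_forall fun u hu => ?_)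
      simpa using hGbd t₀ ht₀ u hu
    have hRInt : IntegrableOn (fun u =>
        (2*(β*N*(γ*M/δ)) - 2*α + β*N*ρ^2) * (x t₀ u - X t₀ u)^2
          + (β*N/ρ^2) * (η t₀ u)^2 + 2*(x t₀ u - X t₀ u) * K u) Ω :=
      (((hsqInt t₀).const_mul _).add (hηsqInt.const_mul _)).add hwKInt
    -- the nonlocal term is nonpositive after integration
    have hKey : ∫ u in Ω, 2*(x t₀ u - X t₀ u) * K u ≤ 0 := by
      set L : (Fin n → ℝ) → ℝ := fun u =>
        ∫ v in Ω, J (u - v) * ((x t₀ v - X t₀ v)^2 - (x t₀ u - X t₀ u)^2) with hL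
      have hw4 : ∀ u v, |(x t₀ v - X t₀ v) - (x t₀ u - X t₀ u)| ≤ 4 * Cb := by
        intro u v
        have a1 := abs_le.mp (hwbd t₀ v); have a2 := abs_le.mp (hwbd t₀ u)
        exact abs_le.mpr ⟨by linarith [a1.1, a2.2], by linarith [a1.2, a2.1]⟩
      have hwsq : ∀ u, |(x t₀ u - X t₀ u)^2| ≤ (2*Cb)^2 := by
        intro u
        rw [abs_pow]
        exact pow_le_pow_left₀ (abs_nonneg _) (hwbd t₀ u) 2
      have hwsq4 : ∀ u v, |(x t₀ v - X t₀ v)^2 - (x t₀ u - X t₀ u)^2| ≤ 2*(2*Cb)^2 := by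
        intro u v
        have a1 := abs_le.mp (hwsq v); have a2 := abs_le.mp (hwsq u)
        exact abs_le.mpr ⟨by linarith [a1.1, a2.2], by linarith [a1.2, a2.1]⟩
      -- integrability in v for fixed u
      have hIv1 : ∀ u, IntegrableOn (fun v => (2*(x t₀ u - X t₀ u)) *
          (J (u - v) * ((x t₀ v - X t₀ v) - (x t₀ u - X t₀ u)))) Ω := by
        intro u
        apply aux_integrable (Continuous.aestronglyMeasurable ?_).restrict
          (C := 2*(2*Cb) * (CJ * (4*Cb)))
        · intro v
          rw [abs_mul, abs_mul, abs_mul, abs_two]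
          have e1 := mul_le_mul (hJbd (u-v)) (hw4 u v) (abs_nonneg _) hCJ0
          have e2 := hwbd t₀ u
          nlinarith [abs_nonneg (x t₀ u - X t₀ u), abs_nonneg (J (u-v)),
            abs_nonneg ((x t₀ v - X t₀ v) - (x t₀ u - X t₀ u)),
            mul_le_mul e2 e1 (by positivity) (by linarith [hCb0] : (0:ℝ) ≤ 2*Cb)]
        · exact continuous_const.mul ((hJc.comp (continuous_const.sub continuous_id)).mul
            ((hwc.comp continuous_id).sub continuous_const))
      have hIv2 : ∀ u, IntegrableOn (fun v =>
          J (u - v) * ((x t₀ v - X t₀ v)^2 - (x t₀ u - X t₀ u)^2)) Ω := by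
        intro u
        apply aux_integrable (Continuous.aestronglyMeasurable ?_).restrict
          (C := CJ * (2*(2*Cb)^2))
        · intro v
          rw [abs_mul]
          exact mul_le_mul (hJbd _) (hwsq4 u v) (abs_nonneg _) hCJ0
        · exact (hJc.comp (continuous_const.sub continuous_id)).mul
            (((hwc.comp continuous_id).pow 2).sub continuous_const)
      have hIv3 : ∀ u, IntegrableOn (fun v => J (u - v) * (x t₀ v - X t₀ v)^2) Ω := by
        intro u
        apply aux_integrable (Continuous.aestronglyMeasurable ?_).restrict
          (C := CJ * (2*Cb)^2)
        · intro v
          rw [abs_mul]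
          exact mul_le_mul (hJbd _) (hwsq v) (abs_nonneg _) hCJ0
        · exact (hJc.comp (continuous_const.sub continuous_id)).mul
            ((hwc.comp continuous_id).pow 2)
      have hIv4 : ∀ u, IntegrableOn (fun v => J (u - v) * (x t₀ u - X t₀ u)^2) Ω := by
        intro u
        apply aux_integrable (Continuous.aestronglyMeasurable ?_).restrict
          (C := CJ * (2*Cb)^2)
        · intro v
          rw [abs_mul]
          exact mul_le_mul (hJbd _) (hwsq u) (abs_nonneg _) hCJ0
        · exact (hJc.comp (continuous_const.sub continuous_id)).mul continuous_const
      -- pointwise comparison with L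
      have h2wKle : ∀ u, 2*(x t₀ u - X t₀ u) * K u ≤ L u := by
        intro u
        have heq : 2*(x t₀ u - X t₀ u) * K u = ∫ v in Ω, (2*(x t₀ u - X t₀ u)) *
            (J (u - v) * ((x t₀ v - X t₀ v) - (x t₀ u - X t₀ u))) := by
          rw [hK, integral_const_mul]
        rw [heq, hL]
        refine setIntegral_mono_on (hIv1 u) (hIv2 u) hΩm (fun v _ => ?_)
        nlinarith [hJnn (u - v), sq_nonneg ((x t₀ v - X t₀ v) - (x t₀ u - X t₀ u))]
      -- L is continuous and bounded
      have hLc : Continuous L :=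
        hKcont (fun u => (x t₀ u - X t₀ u)^2) (hwc.pow 2) ((2*Cb)^2) hwsq
      have hLb : ∀ u, |L u| ≤ CJ * (2*(2*Cb)^2) * (volume Ω).toReal := by
        intro u
        rw [hL, ← Real.norm_eq_abs]
        refine norm_setIntegral_le_of_norm_le_const hΩfin (fun v _ => ?_)
        rw [Real.norm_eq_abs, abs_mul]
        exact mul_le_mul (hJbd _) (hwsq4 u v) (abs_nonneg _) hCJ0
      have hLInt : IntegrableOn L Ω :=
        aux_integrable hLc.aestronglyMeasurable.restrict hLb
      have hstep : ∫ u in Ω, 2*(x t₀ u - X t₀ u) * K u ≤ ∫ u in Ω, L u :=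
        setIntegral_mono_on hwKInt hLInt hΩm (fun u _ => h2wKle u)
      -- the integral of L vanishes by symmetry of J
      set A : (Fin n → ℝ) → ℝ := fun u => ∫ v in Ω, J (u - v) * (x t₀ v - X t₀ v)^2 with hA
      set B : (Fin n → ℝ) → ℝ := fun u => ∫ v in Ω, J (u - v) * (x t₀ u - X t₀ u)^2 with hB
      have hLsplit : ∀ u, L u = A u - B u := by
        intro u
        show (∫ v in Ω, J (u - v) * ((x t₀ v - X t₀ v)^2 - (x t₀ u - X t₀ u)^2))
          = (∫ v in Ω, J (u - v) * (x t₀ v - X t₀ v)^2)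
            - ∫ v in Ω, J (u - v) * (x t₀ u - X t₀ u)^2
        rw [← integral_sub (hIv3 u) (hIv4 u)]
        refine integral_congr_ae (Filter.Eventually.of_forall fun v => ?_)
        ring
      have hAc : Continuous A := by
        rw [hA]
        apply continuous_of_dominated (bound := fun _ => CJ * (2*Cb)^2)
        · exact fun u => (hIv3 u).aestronglyMeasurable
        · intro u
          refine Filter.Eventually.of_forall fun v => ?_
          rw [Real.norm_eq_abs, abs_mul]
          exact mul_le_mul (hJbd _) (hwsq v) (abs_nonneg _) hCJ0
        · exact integrable_const _
        · refine Filter.Eventually.of_forall fun v => ?_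
          exact (hJc.comp (continuous_id.sub continuous_const)).mul continuous_const
      have hBc : Continuous B := by
        rw [hB]
        apply continuous_of_dominated (bound := fun _ => CJ * (2*Cb)^2)
        · exact fun u => (hIv4 u).aestronglyMeasurable
        · intro u
          refine Filter.Eventually.of_forall fun v => ?_
          rw [Real.norm_eq_abs, abs_mul]
          exact mul_le_mul (hJbd _) (hwsq u) (abs_nonneg _) hCJ0
        · exact integrable_const _
        · refine Filter.Eventually.of_forall fun v => ?_
          exact (hJc.comp (continuous_id.sub continuous_const)).mul (hwc.pow 2)
      have hAb : ∀ u, |A u| ≤ CJ * (2*Cb)^2 * (volume Ω).toReal := by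
        intro u
        rw [hA, ← Real.norm_eq_abs]
        refine norm_setIntegral_le_of_norm_le_const hΩfin (fun v _ => ?_)
        rw [Real.norm_eq_abs, abs_mul]
        exact mul_le_mul (hJbd _) (hwsq v) (abs_nonneg _) hCJ0
      have hBb : ∀ u, |B u| ≤ CJ * (2*Cb)^2 * (volume Ω).toReal := by
        intro u
        rw [hB, ← Real.norm_eq_abs]
        refine norm_setIntegral_le_of_norm_le_const hΩfin (fun v _ => ?_)
        rw [Real.norm_eq_abs, abs_mul]
        exact mul_le_mul (hJbd _) (hwsq u) (abs_nonneg _) hCJ0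
      have hAInt : IntegrableOn A Ω := aux_integrable hAc.aestronglyMeasurable.restrict hAb
      have hBInt : IntegrableOn B Ω := aux_integrable hBc.aestronglyMeasurable.restrict hBb
      have hprod : Integrable (Function.uncurry fun u v => J (u - v) * (x t₀ v - X t₀ v)^2)
          ((volume.restrict Ω).prod (volume.restrict Ω)) := by
        apply aux_integrable (Continuous.aestronglyMeasurable ?_)
          (C := CJ * (2*Cb)^2)
        · rintro ⟨u, v⟩
          rw [Function.uncurry]
          rw [abs_mul]
          exact mul_le_mul (hJbd _) (hwsq v) (abs_nonneg _) hCJ0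
        · exact (hJc.comp (continuous_fst.sub continuous_snd)).mul
            ((hwc.comp continuous_snd).pow 2)
      have hswap : ∫ u in Ω, A u = ∫ u in Ω, B u := by
        rw [hA, hB]
        rw [MeasureTheory.integral_integral_swap hprod]
        refine integral_congr_ae (Filter.Eventually.of_forall fun y => ?_)
        refine integral_congr_ae (Filter.Eventually.of_forall fun z => ?_)
        simp only
        rw [show z - y = -(y - z) by ring, hJsym]
      have hLzero : ∫ u in Ω, L u = 0 := by
        calc ∫ u in Ω, L u = ∫ u in Ω, (A u - B u) :=
              integral_congr_ae (Filter.Eventually.of_forall hLsplit)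
          _ = (∫ u in Ω, A u) - ∫ u in Ω, B u := integral_sub hAInt hBInt
          _ = 0 := by rw [hswap]; ring
      linarith [hstep, hLzero]
    -- putting things together
    have hI1 : (0:ℝ) ≤ ∫ u in Ω, (x t₀ u - X t₀ u)^2 :=
      setIntegral_nonneg hΩm (fun u _ => sq_nonneg _)
    have hI2 : (0:ℝ) ≤ ∫ u in Ω, (η t₀ u)^2 :=
      setIntegral_nonneg hΩm (fun u _ => sq_nonneg _)
    calc ∫ u in Ω, G t₀ u
        ≤ ∫ u in Ω, ((2*(β*N*(γ*M/δ)) - 2*α + β*N*ρ^2) * (x t₀ u - X t₀ u)^2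
            + (β*N/ρ^2) * (η t₀ u)^2 + 2*(x t₀ u - X t₀ u) * K u) :=
          setIntegral_mono_on hGInt hRInt hΩm hpt
      _ = (2*(β*N*(γ*M/δ)) - 2*α + β*N*ρ^2) * (∫ u in Ω, (x t₀ u - X t₀ u)^2)
            + (β*N/ρ^2) * (∫ u in Ω, (η t₀ u)^2) + ∫ u in Ω, 2*(x t₀ u - X t₀ u) * K u := by
          have hA : IntegrableOn (fun u =>
              (2*(β*N*(γ*M/δ)) - 2*α + β*N*ρ^2) * (x t₀ u - X t₀ u)^2) Ω :=
            (hsqInt t₀).const_mul _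
          have hB : IntegrableOn (fun u => (β*N/ρ^2) * (η t₀ u)^2) Ω :=
            hηsqInt.const_mul _
          have hAB : IntegrableOn (fun u =>
              (2*(β*N*(γ*M/δ)) - 2*α + β*N*ρ^2) * (x t₀ u - X t₀ u)^2
                + (β*N/ρ^2) * (η t₀ u)^2) Ω := hA.add hB
          rw [integral_add hAB hwKInt, integral_add hA hB,
            integral_const_mul, integral_const_mul]
      _ ≤ 2 * (β * N * (γ * M / δ + ρ ^ 2) - α) * (∫ u in Ω, (x t₀ u - X t₀ u) ^ 2) +
            2 * (β * N / ρ ^ 2) * ∫ u in Ω, (η t₀ u) ^ 2 := by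
          have hbn1 : (0:ℝ) ≤ β*N*ρ^2 := by positivity
          have hbn2 : (0:ℝ) ≤ β*N/ρ^2 := by positivity
          nlinarith [hKey, hI1, hI2]
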